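/- Let k be a positive integer and let G be a group with a finite inverse-closed generating set S such that Cay(G,S) is k-geodetic. If u is a nonempty primitive word over S such that u^r is a geodesic word for every r ≥ 1, and u evaluates to the element g ∈ G, then the centraliser of g in G equals the cyclic subgroup generated by g: C_G(g) = ⟨g⟩. -/

import Mathlib

/-- A connected simple graph is `k`-geodetic if between any pair of vertices there are
at most `k` geodesics (walks of minimal length between their endpoints). -/
def IsKGeodetic {V : Type*} (X : SimpleGraph V) (k : ℕ) : Prop :=
  X.Connected ∧ ∀ (u v : V) (s : Finset (X.Walk u v)),
    (∀ p ∈ s, p.length = X.dist u v) → s.card ≤ k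

/-- The (undirected) Cayley graph of a group `G` with respect to a subset `S`. -/
def cayleyGraph (G : Type*) [Group G] (S : Set G) : SimpleGraph G :=
  SimpleGraph.fromRel (fun g h => g⁻¹ * h ∈ S)


section Aux

/-- `rep n z` is the word `z^n`. -/
def rep {α : Type*} (n : ℕ) (z : List α) : List α := (List.replicate n z).flatten

lemma rep_zero {α : Type*} (z : List α) : rep 0 z = [] := rfl

lemma rep_succ {α : Type*} (n : ℕ) (z : List α) : rep (n+1) z = z ++ rep n z := by
  simp [rep, List.replicate_succ]

lemma rep_one {α : Type*} (z : List α) : rep 1 z = z := by simp [rep]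

lemma rep_add {α : Type*} (m n : ℕ) (z : List α) : rep (m+n) z = rep m z ++ rep n z := by
  induction m with
  | zero => simp [rep_zero]
  | succ m ih => rw [Nat.succ_add, rep_succ, rep_succ, ih, List.append_assoc]

lemma length_rep {α : Type*} (n : ℕ) (z : List α) : (rep n z).length = n * z.length := by
  induction n with
  | zero => simp [rep_zero]
  | succ n ih => rw [rep_succ, List.length_append, ih]; ring

lemma rep_rep {α : Type*} (m n : ℕ) (z : List α) : rep m (rep n z) = rep (m*n) z := by
  induction m with
  | zero => simp [rep_zero]
  | succ m ih => rw [rep_succ, ih, Nat.succ_mul, Nat.add_comm, rep_add]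

lemma prod_rep {G : Type*} [Group G] (n : ℕ) (z : List G) : (rep n z).prod = z.prod ^ n := by
  induction n with
  | zero => simp [rep_zero]
  | succ n ih => rw [rep_succ, List.prod_append, ih, pow_succ']

lemma take_rep {α : Type*} (n : ℕ) (hn : 1 ≤ n) (z : List α) :
    (rep n z).take z.length = z := by
  obtain ⟨m, rfl⟩ := Nat.exists_eq_add_of_le hn
  rw [Nat.add_comm, rep_succ, List.take_append_of_le_length le_rfl, List.take_length]

/-- Commuting words are powers of a common word. -/
lemma comm_words {α : Type*} : ∀ (x y : List α), x ++ y = y ++ x →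
    ∃ (z : List α) (a b : ℕ), x = rep a z ∧ y = rep b z := by
  have key : ∀ N : ℕ, ∀ (x y : List α), x.length + y.length ≤ N → x.length ≤ y.length →
      x ++ y = y ++ x → ∃ (z : List α) (a b : ℕ), x = rep a z ∧ y = rep b z := by
    intro N
    induction N with
    | zero =>
      intro x y hN _ _
      have hx : x = [] := by
        have := List.length_eq_zero_iff.mp (Nat.le_zero.mp (le_trans (Nat.le_add_right _ _) hN))
        exact this
      have hy : y = [] := List.length_eq_zero_iff.mp (Nat.le_zero.mp
        (le_trans (Nat.le_add_left _ _) hN))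
      exact ⟨[], 0, 0, by simp [hx, rep_zero], by simp [hy, rep_zero]⟩
    | succ N ih =>
      intro x y hN hle hcomm
      rcases eq_or_ne x [] with rfl | hx
      · exact ⟨y, 0, 1, by simp [rep_zero], by simp [rep_one]⟩
      · -- x is a prefix of y
        have hx1 : 1 ≤ x.length := List.length_pos_iff.mpr hx
        have htake : x = y.take x.length := by
          have h1 : (x ++ y).take x.length = x := by
            rw [List.take_append_of_le_length le_rfl, List.take_length]
          have h2 : (y ++ x).take x.length = y.take x.length :=
            List.take_append_of_le_length hle
          rw [hcomm] at h1; rw [h2] at h1; exact h1.symm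
        set y' := y.drop x.length with hy'
        have hsplit : y = x ++ y' := by rw [htake, hy']; exact (List.take_append_drop _ _).symm
        have hcomm' : x ++ y' = y' ++ x := by
          have : x ++ (x ++ y') = (x ++ y') ++ x := by rw [← hsplit]; exact hcomm
          rw [List.append_assoc] at this
          exact List.append_cancel_left this
        have hy'len : y'.length = y.length - x.length := by rw [hy']; simp
        rcases le_or_gt x.length y'.length with h | h
        · obtain ⟨z, a, b, hxz, hyz⟩ := ih x y' (by omega) h hcomm'
          exact ⟨z, a, a + b, hxz, by rw [hsplit, hxz, hyz, rep_add]⟩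
        · obtain ⟨z, b, a, hyz, hxz⟩ := ih y' x (by omega) (le_of_lt h) hcomm'.symm
          exact ⟨z, a, a + b, hxz, by rw [hsplit, hxz, hyz, rep_add]⟩
  intro x y hcomm
  rcases le_or_gt x.length y.length with h | h
  · exact key _ x y le_rfl h hcomm
  · obtain ⟨z, b, a, h1, h2⟩ := key _ y x le_rfl (le_of_lt h) hcomm.symm
    exact ⟨z, a, b, h2, h1⟩

/-- Equal powers implies commuting. -/
lemma comm_of_rep_eq_rep {α : Type*} : ∀ (x y : List α) (i j : ℕ), 1 ≤ i → 1 ≤ j →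
    rep i x = rep j y → x ++ y = y ++ x := by
  have key : ∀ (x y : List α) (i j : ℕ), 1 ≤ i → 1 ≤ j → rep i x = rep j y →
      x.length ≤ y.length → x ++ y = y ++ x := by
    intro x y i j hi hj h hle
    rcases eq_or_ne x [] with rfl | hx
    · simp
    · have hx1 : 1 ≤ x.length := List.length_pos_iff.mpr hx
      have hxy : x = y.take x.length := by
        have h1 : x = (rep i x).take x.length := (take_rep i hi x).symm
        have h2 : rep j y = y ++ rep (j-1) y := by
          rw [← rep_succ]; congr 1; omega
        conv_lhs => rw [h1, h, h2]
        rw [List.take_append_of_le_length hle]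
      set z := y.drop x.length with hz
      have hsplit : y = x ++ z := by rw [hxy, hz]; exact (List.take_append_drop _ _).symm
      have claim1 : ∀ m : ℕ, x ++ rep m (z ++ x) = rep m (x ++ z) ++ x := by
        intro m
        induction m with
        | zero => simp [rep_zero]
        | succ m ih =>
          rw [rep_succ, rep_succ]
          calc x ++ ((z ++ x) ++ rep m (z ++ x)) = (x ++ z) ++ (x ++ rep m (z ++ x)) := by
                simp [List.append_assoc]
            _ = (x ++ z) ++ (rep m (x ++ z) ++ x) := by rw [ih]
            _ = ((x ++ z) ++ rep m (x ++ z)) ++ x := by simp [List.append_assoc]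
      have hrep : rep j (z ++ x) = rep i x := by
        have e1 : x ++ rep j (z ++ x) = rep j (x ++ z) ++ x := claim1 j
        have e2 : rep j (x ++ z) = rep i x := by rw [← hsplit, ← h]
        have e3 : rep i x ++ x = x ++ rep i x := by
          have := rep_add i 1 x
          rw [Nat.add_comm] at this
          rw [rep_one] at this
          rw [← this, rep_add, rep_one]
        rw [e2, e3] at e1
        exact (List.append_cancel_left e1)
      have hzx : z ++ x = x ++ z := by
        have hlen : (z ++ x).length = (x ++ z).length := by simp [Nat.add_comm]
        have e := congrArg (List.take (z ++ x).length) hrep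
        rw [take_rep j hj] at e
        rw [h, hsplit] at e
        rw [hlen, take_rep j hj] at e
        exact e
      calc x ++ y = x ++ (x ++ z) := by rw [← hsplit]
        _ = x ++ (z ++ x) := by rw [hzx]
        _ = (x ++ z) ++ x := by rw [List.append_assoc]
        _ = y ++ x := by rw [← hsplit]
  intro x y i j hi hj h
  rcases le_or_gt x.length y.length with hle | hlt
  · exact key x y i j hi hj h hle
  · exact (key y x j i hj hi h.symm (le_of_lt hlt)).symm

/-- A word commuting with a positive power of a primitive word is a power of it. -/
lemma rep_of_comm_rep {α : Type*} (u : List α) (hu : u ≠ [])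
    (hprim : ∀ (v : List α) (m : ℕ), 1 < m → u ≠ rep m v)
    (w : List α) (t : ℕ) (ht : 1 ≤ t) (hcomm : w ++ rep t u = rep t u ++ w) :
    ∃ q : ℕ, w = rep q u := by
  obtain ⟨z, a, b, hwz, huz⟩ := comm_words w (rep t u) hcomm
  rcases Nat.eq_zero_or_pos a with rfl | ha
  · exact ⟨0, by rw [hwz, rep_zero, rep_zero]⟩
  have hz : z ≠ [] := by
    rintro rfl
    have : rep t u = [] := by
      rw [huz]
      exact List.length_eq_zero_iff.mp (by rw [length_rep]; simp)
    rw [show rep t u = u ++ rep (t-1) u by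
      rw [← rep_succ]; congr 1; omega] at this
    simp at this
    exact hu this.1
  have hb : 1 ≤ b := by
    rcases Nat.eq_zero_or_pos b with rfl | hb
    · exfalso
      rw [rep_zero] at huz
      have : (rep t u).length = 0 := by rw [huz]; rfl
      rw [length_rep] at this
      have : u.length = 0 := by
        rcases Nat.mul_eq_zero.mp this with h | h
        · omega
        · exact h
      exact hu (List.length_eq_zero_iff.mp this)
    · exact hb
  have hcuz : u ++ z = z ++ u := comm_of_rep_eq_rep u z t b ht hb huz
  obtain ⟨c, p, q, hux, hzx⟩ := comm_words u z hcuz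
  have hp : p = 1 := by
    rcases Nat.lt_or_ge p 2 with h2 | h2
    · interval_cases p
      · exfalso; exact hu (by rw [hux, rep_zero])
      · rfl
    · exact absurd hux (hprim c p h2)
  rw [hp, rep_one] at hux
  subst hux
  exact ⟨a * q, by rw [hwz, hzx, rep_rep]⟩



section Cayley
variable {G : Type*} [Group G] {S : Set G}
lemma cayley_adj (hinv : ∀ s ∈ S, s⁻¹ ∈ S) (hone : (1:G) ∉ S) {a b : G} :
    (cayleyGraph G S).Adj a b ↔ a⁻¹ * b ∈ S := by
  rw [cayleyGraph, SimpleGraph.fromRel_adj]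
  constructor
  · rintro ⟨hne, h | h⟩
    · exact h
    · simpa using hinv _ h
  · intro h
    refine ⟨fun hab => hone ?_, Or.inl h⟩
    subst hab; simpa using h

def walkOfWord (hinv : ∀ s ∈ S, s⁻¹ ∈ S) (hone : (1:G) ∉ S) : (w : List G) → (∀ x ∈ w, x ∈ S) → (g : G) →
    (cayleyGraph G S).Walk g (g * w.prod)
  | [], _, g => SimpleGraph.Walk.nil.copy rfl (by simp)
  | a :: t, h, g =>
    (SimpleGraph.Walk.cons
      (show (cayleyGraph G S).Adj g (g * a) from
        (cayley_adj hinv hone).mpr (by simpa using h a (by simp)))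
      (walkOfWord hinv hone t (fun x hx => h x (List.mem_cons_of_mem _ hx)) (g * a))).copy rfl
      (by simp [mul_assoc])

lemma length_walkOfWord (hinv : ∀ s ∈ S, s⁻¹ ∈ S) (hone : (1:G) ∉ S) : ∀ (w : List G) (h : ∀ x ∈ w, x ∈ S) (g : G),
    (walkOfWord hinv hone w h g).length = w.length
  | [], _, g => by rw [walkOfWord, SimpleGraph.Walk.length_copy]; rfl
  | a :: t, h, g => by
    simp [walkOfWord, length_walkOfWord hinv hone t _ (g * a)]

lemma getVert_walkOfWord (hinv : ∀ s ∈ S, s⁻¹ ∈ S) (hone : (1:G) ∉ S) : ∀ (w : List G) (h : ∀ x ∈ w, x ∈ S) (g : G) (i : ℕ),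
    (walkOfWord hinv hone w h g).getVert i = g * (w.take i).prod
  | [], _, g, i => by
    rw [walkOfWord, SimpleGraph.Walk.getVert_copy]; simp
  | a :: t, h, g, 0 => by simp [walkOfWord]
  | a :: t, h, g, (i+1) => by
    have e : (walkOfWord hinv hone (a :: t) h g).getVert (i+1) = (walkOfWord hinv hone t (fun x hx => h x (List.mem_cons_of_mem _ hx)) (g * a)).getVert i :=
      (SimpleGraph.Walk.getVert_copy _ _ _ _).trans (SimpleGraph.Walk.getVert_cons_succ _ _)
    rw [e, getVert_walkOfWord hinv hone t _ (g * a) i]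
    simp [mul_assoc]

lemma word_of_walk (hinv : ∀ s ∈ S, s⁻¹ ∈ S) (hone : (1:G) ∉ S) : ∀ {x y : G} (p : (cayleyGraph G S).Walk x y),
    ∃ w : List G, (∀ a ∈ w, a ∈ S) ∧ w.length = p.length ∧ x * w.prod = y := by
  intro x y p
  induction p with
  | nil => exact ⟨[], by simp, by simp, by simp⟩
  | @cons a b c hadj p ih =>
    obtain ⟨w, hw, hlen, hprod⟩ := ih
    exact ⟨a⁻¹ * b :: w, by
      intro s hs
      rcases List.mem_cons.mp hs with rfl | hs
      · exact (cayley_adj hinv hone).mp hadj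
      · exact hw s hs, by simp [hlen], by simpa [mul_assoc] using hprod⟩

lemma dist_le_word (hinv : ∀ s ∈ S, s⁻¹ ∈ S) (hone : (1:G) ∉ S) (w : List G) (h : ∀ x ∈ w, x ∈ S) :
    (cayleyGraph G S).dist 1 w.prod ≤ w.length := by
  have := SimpleGraph.dist_le ((walkOfWord hinv hone w h 1).copy rfl (one_mul _))
  rwa [SimpleGraph.Walk.length_copy, length_walkOfWord] at this

lemma exists_geodesic_word (hinv : ∀ s ∈ S, s⁻¹ ∈ S) (hone : (1:G) ∉ S) (hconn : (cayleyGraph G S).Connected) (x : G) :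
    ∃ w : List G, (∀ a ∈ w, a ∈ S) ∧ w.prod = x ∧
      w.length = (cayleyGraph G S).dist 1 x := by
  obtain ⟨p, hp⟩ := hconn.exists_walk_length_eq_dist 1 x
  obtain ⟨w, hw, hlen, hprod⟩ := word_of_walk hinv hone p
  exact ⟨w, hw, by simpa using hprod, by rw [hlen, hp]⟩

end Cayley

lemma getElem_eq_prod_take {G : Type*} [Group G] (l : List G) (i : ℕ) (h : i < l.length) :
    l[i] = ((l.take i).prod)⁻¹ * (l.take (i+1)).prod := by
  rw [List.take_succ, List.prod_append]
  have : l[i]? = some l[i] := List.getElem?_eq_getElem h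
  rw [this]
  simp

lemma words_eq_of_prefix_prods {G : Type*} [Group G] (w₁ w₂ : List G)
    (hlen : w₁.length = w₂.length)
    (hpre : ∀ i, (w₁.take i).prod = (w₂.take i).prod) : w₁ = w₂ := by
  apply List.ext_getElem hlen
  intro i h1 h2
  rw [getElem_eq_prod_take _ _ h1, getElem_eq_prod_take _ _ h2, hpre i, hpre (i+1)]

end Aux

/-- Let `Cay(G, S)` be `k`-geodetic. If `u` is a nonempty primitive word
over `S` (no word `v` satisfies `u = v^m` with `m > 1`) such that every power `u^r`
(`r ≥ 1`) is a geodesic word, then the centraliser of the element `g` represented by `u`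
is exactly the cyclic subgroup generated by `g`. Here a word is modelled as a list of
elements of `S`, its evaluation is the product of the list, and being a geodesic word
means its length equals the graph distance from `1` to its evaluation. -/
theorem centralizer_eq_zpowers_of_primitive_allPowersGeodesic {G : Type*} [Group G]
    (k : ℕ) (hk : 0 < k) (S : Set G) (hfin : S.Finite) (hinv : ∀ s ∈ S, s⁻¹ ∈ S)
    (hone : (1 : G) ∉ S) (hgen : Subgroup.closure S = ⊤)
    (hgeo : IsKGeodetic (cayleyGraph G S) k)
    (u : List G) (hmem : ∀ x ∈ u, x ∈ S) (hne : u ≠ [])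
    (hprim : ∀ (v : List G) (m : ℕ), 1 < m → u ≠ (List.replicate m v).flatten)
    (hpow : ∀ r : ℕ, 1 ≤ r →
      ((List.replicate r u).flatten).length
        = (cayleyGraph G S).dist 1 ((List.replicate r u).flatten).prod) :
    Subgroup.centralizer {u.prod} = Subgroup.zpowers u.prod := by
  classical
  set g := u.prod with hg
  set n := u.length with hn
  have hn1 : 1 ≤ n := List.length_pos_iff.mpr hne
  have hconn := hgeo.1
  apply le_antisymm
  · -- hard direction
    rw [SetLike.le_def]
    intro h hcent
    by_contra hnz
    have hgh : Commute g h := ((Subgroup.mem_centralizer_iff.mp hcent) g rfl)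
    have hcom : ∀ s : ℕ, h * g ^ s = g ^ s * h := fun s => ((hgh.pow_left s).symm).eq
    -- distance of powers
    have dist1 : ∀ s : ℕ, (cayleyGraph G S).dist 1 (g ^ s) = s * n := by
      intro s
      rcases Nat.eq_zero_or_pos s with rfl | hs
      · simp
      · have := hpow s hs
        rw [show (List.replicate s u).flatten = rep s u from rfl, length_rep, prod_rep] at this
        rw [← hg, ← hn] at this
        exact this.symm
    -- triangle inequalities via words
    have tri : ∀ x y : G, (cayleyGraph G S).dist 1 (x * y)
        ≤ (cayleyGraph G S).dist 1 x + (cayleyGraph G S).dist 1 y := by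
      intro x y
      obtain ⟨w1, h1S, h1p, h1l⟩ := exists_geodesic_word hinv hone hconn x
      obtain ⟨w2, h2S, h2p, h2l⟩ := exists_geodesic_word hinv hone hconn y
      have := dist_le_word hinv hone (w1 ++ w2) (by
        intro a ha
        rcases List.mem_append.mp ha with ha | ha
        · exact h1S a ha
        · exact h2S a ha)
      rwa [List.prod_append, h1p, h2p, List.length_append, h1l, h2l] at this
    have invle : ∀ x : G, (cayleyGraph G S).dist 1 x⁻¹ ≤ (cayleyGraph G S).dist 1 x := by
      intro x
      obtain ⟨w1, h1S, h1p, h1l⟩ := exists_geodesic_word hinv hone hconn x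
      have := dist_le_word hinv hone ((w1.map (fun a => a⁻¹)).reverse) (by
        intro a ha
        obtain ⟨b, hb, rfl⟩ := List.mem_map.mp (List.mem_reverse.mp ha)
        exact hinv b (h1S b hb))
      rwa [← List.prod_inv_reverse, h1p, List.length_reverse, List.length_map, h1l] at this
    set m := (cayleyGraph G S).dist 1 h with hm
    -- the defect function is bounded
    have bound : ∀ s : ℕ,
        ((cayleyGraph G S).dist 1 (g ^ s * h) : ℤ) - s * n ∈ Set.Icc (-(m:ℤ)) m := by
      intro s
      have hup : (cayleyGraph G S).dist 1 (g ^ s * h) ≤ s * n + m := by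
        have := tri (g ^ s) h
        rwa [dist1 s] at this
      have hlo : s * n ≤ (cayleyGraph G S).dist 1 (g ^ s * h) + m := by
        have h1 := tri (g ^ s * h) h⁻¹
        rw [mul_inv_cancel_right] at h1
        have h2 := invle h
        rw [dist1 s] at h1
        omega
      simp only [Set.mem_Icc]
      push_cast
      omega
    haveI : Finite (Set.Icc (-(m:ℤ)) m) := (Set.finite_Icc _ _).to_subtype
    obtain ⟨⟨c, hcmem⟩, hcfib⟩ := Finite.exists_infinite_fiber
      (fun s : ℕ => (⟨((cayleyGraph G S).dist 1 (g ^ s * h) : ℤ) - s * n, bound s⟩ :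
        Set.Icc (-(m:ℤ)) m))
    have hR : {s : ℕ | ((cayleyGraph G S).dist 1 (g ^ s * h) : ℤ) - s * n = c}.Infinite := by
      have := Set.infinite_coe_iff.mp hcfib
      apply Set.Infinite.mono ?_ this
      intro s hs
      simpa [Subtype.ext_iff] using hs
    obtain ⟨r, hr⟩ := hR.nonempty
    obtain ⟨r', hr', hrr'⟩ := hR.exists_gt (r + k)
    simp only [Set.mem_setOf_eq] at hr hr'
    set M := r' - r with hM
    have hkM : k ≤ M := by omega
    have hrM : r + M = r' := by omega
    -- distance relation
    have hlen' : (cayleyGraph G S).dist 1 (g ^ r' * h)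
        = (cayleyGraph G S).dist 1 (g ^ r * h) + M * n := by
      have hMz : (M : ℤ) * n = (r' : ℤ) * n - (r : ℤ) * n := by
        have : (M : ℤ) = (r' : ℤ) - r := by
          simp only [hM]; push_cast [Nat.cast_sub (by omega : r ≤ r')]; ring
        rw [this]; ring
      have : ((cayleyGraph G S).dist 1 (g ^ r' * h) : ℤ)
          = ((cayleyGraph G S).dist 1 (g ^ r * h) : ℤ) + M * n := by
        rw [hMz]; omega
      exact_mod_cast this
    obtain ⟨w, hwS, hwprod, hwlen⟩ := exists_geodesic_word hinv hone hconn (g ^ r * h)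
    have hrepS : ∀ (t : ℕ) (x : G), x ∈ rep t u → x ∈ S := by
      intro t x hx
      obtain ⟨l, hl, hxl⟩ := List.mem_flatten.mp hx
      rw [List.eq_of_mem_replicate hl] at hxl
      exact hmem x hxl
    set Q : ℕ → List G := fun a => rep a u ++ w ++ rep (M - a) u with hQ
    have hQS : ∀ a, ∀ x ∈ Q a, x ∈ S := by
      intro a x hx
      simp only [hQ, List.append_assoc, List.mem_append] at hx
      rcases hx with hx | hx | hx
      · exact hrepS _ _ hx
      · exact hwS x hx
      · exact hrepS _ _ hx
    have hQprod : ∀ a, a ≤ M → (Q a).prod = g ^ r' * h := by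
      intro a ha
      simp only [hQ, List.prod_append, prod_rep, hwprod]
      calc g ^ a * (g ^ r * h) * g ^ (M - a)
          = g ^ a * g ^ r * (h * g ^ (M - a)) := by simp [mul_assoc]
        _ = g ^ a * g ^ r * (g ^ (M - a) * h) := by rw [hcom (M - a)]
        _ = (g ^ a * g ^ r * g ^ (M - a)) * h := by simp [mul_assoc]
        _ = g ^ (a + r + (M - a)) * h := by rw [pow_add, pow_add]
        _ = g ^ r' * h := by
            congr 2
            omega
    have hQlen : ∀ a, a ≤ M → (Q a).length = M * n + w.length := by
      intro a ha
      simp only [hQ, List.length_append, length_rep]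
      have h1 : a * n + (M - a) * n = M * n := by
        rw [← Nat.add_mul]
        congr 1
        omega
      linarith
    -- key: distinct words from the primitivity assumption
    have key : ∀ a b, a ≤ M → b ≤ M → a < b → Q a ≠ Q b := by
      intro a b ha hb hab hQeq
      have h1 : rep b u = rep a u ++ rep (b - a) u := by
        rw [← rep_add]; congr 1; omega
      have h2 : rep (M - a) u = rep (b - a) u ++ rep (M - b) u := by
        rw [← rep_add]; congr 1; omega
      simp only [hQ, h1, h2, List.append_assoc] at hQeq
      have h3 := List.append_cancel_left hQeq
      rw [← List.append_assoc, ← List.append_assoc] at h3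
      have h4 : w ++ rep (b - a) u = rep (b - a) u ++ w := List.append_cancel_right h3
      obtain ⟨q, hq⟩ := rep_of_comm_rep u hne (fun v m hm => hprim v m hm) w (b - a)
        (by omega) h4
      have h5 : g ^ r * h = g ^ q := by rw [← hwprod, hq, prod_rep]
      apply hnz
      have h6 : h = (g ^ r)⁻¹ * g ^ q := by rw [← h5]; group
      rw [h6]
      exact mul_mem (inv_mem (pow_mem (Subgroup.mem_zpowers g) r))
        (pow_mem (Subgroup.mem_zpowers g) q)
    -- build the walks
    set X := g ^ r' * h with hX
    set W : ℕ → (cayleyGraph G S).Walk 1 X := fun a =>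
      (walkOfWord hinv hone (Q (min a M)) (hQS (min a M)) 1).copy rfl
        (by rw [one_mul, hQprod _ (min_le_right a M)]) with hW
    have hWlen : ∀ a, (W a).length = M * n + w.length := by
      intro a
      simp only [hW, SimpleGraph.Walk.length_copy, length_walkOfWord]
      exact hQlen _ (min_le_right a M)
    have hdistX : (cayleyGraph G S).dist 1 X = M * n + w.length := by
      rw [hX, hlen', hwlen]; omega
    have hinj : Set.InjOn W (Finset.range (k + 1)) := by
      intro a ha b hb hWab
      simp only [Finset.coe_range, Set.mem_Iio] at ha hb
      have hminA : min a M = a := Nat.min_eq_left (by omega)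
      have hminB : min b M = b := Nat.min_eq_left (by omega)
      by_contra hne'
      have hQab : Q a = Q b := by
        apply words_eq_of_prefix_prods
        · rw [hQlen a (by omega), hQlen b (by omega)]
        · intro i
          have := congrArg (fun p => SimpleGraph.Walk.getVert p i) hWab
          simp only [hW, SimpleGraph.Walk.getVert_copy, getVert_walkOfWord, one_mul,
            hminA, hminB] at this
          exact this
      rcases lt_trichotomy a b with hlt | heq | hlt
      · exact key a b (by omega) (by omega) hlt hQab
      · exact hne' heq
      · exact key b a (by omega) (by omega) hlt hQab.symm
    have hcard : ((Finset.range (k + 1)).image W).card = k + 1 := by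
      rw [Finset.card_image_of_injOn hinj, Finset.card_range]
    have hle := hgeo.2 1 X ((Finset.range (k + 1)).image W) (by
      intro p hp
      obtain ⟨a, _, rfl⟩ := Finset.mem_image.mp hp
      rw [hWlen a, hdistX])
    omega
  · -- easy direction
    rw [Subgroup.zpowers_le]
    rw [Subgroup.mem_centralizer_iff]
    intro x hx
    rw [Set.mem_singleton_iff] at hx
    subst hx
    rfl
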